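/- Let c be a prefix-compatible cost function on a temporal graph 𝒢, fix a source s, and suppose that the induced set of optimal temporal walks 𝒲^(c) contains two walks starting at s such that one visits vertex appearance (v,t) before vertex appearance (w,t̂) and the other visits (w,t̂) before (v,t) (that is, the predecessor relation of s with respect to 𝒲^(c) is cyclic). Then there exists a c-optimal walk starting at s that visits the same vertex appearance twice; consequently, c is not finite. -/

import Mathlib

open scoped Classical

/-- A time arc `(u, v, t)`: a transition from vertex `u` to vertex `v` at time step `t`. -/
abbrev TArc (V : Type*) := V × V × ℕ

/-- A directed temporal graph `𝒢 = (V, ℰ, T)`: the time arcs connect distinct vertices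
and carry time labels in `[T] = {1, …, T}`. -/
structure TemporalGraph (V : Type*) where
  lifetime : ℕ
  arcs : Set (TArc V)
  arcs_valid : ∀ e ∈ arcs, e.1 ≠ e.2.1 ∧ 1 ≤ e.2.2 ∧ e.2.2 ≤ lifetime

namespace TemporalGraph

variable {V : Type*}

/-- `L` is a temporal walk of `G`: a nonempty sequence of time arcs of `G` in which the
endpoint of each arc is the starting point of the next one, with non-decreasing labels. -/
def IsTWalk (G : TemporalGraph V) (L : List (TArc V)) : Prop :=
  L ≠ [] ∧ (∀ e ∈ L, e ∈ G.arcs) ∧ L.Chain' fun e f => e.2.1 = f.1 ∧ e.2.2 ≤ f.2.2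

/-- The walk `L` starts at vertex `s`. -/
def StartsAt (s : V) (L : List (TArc V)) : Prop := ∃ e ∈ L.head?, e.1 = s

/-- The walk `L` ends at vertex `z`. -/
def EndsAt (z : V) (L : List (TArc V)) : Prop := ∃ e ∈ L.getLast?, e.2.1 = z

/-- The walk `L` ends at the vertex appearance `(v, t)`. -/
def EndsAtApp (v : V) (t : ℕ) (L : List (TArc V)) : Prop :=
  ∃ e ∈ L.getLast?, e.2.1 = v ∧ e.2.2 = t

/-- `L` is an `s`-`z`-walk of `G`. -/
def IsWalkFromTo (G : TemporalGraph V) (s z : V) (L : List (TArc V)) : Prop :=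
  G.IsTWalk L ∧ StartsAt s L ∧ EndsAt z L

/-- `L` is an `s`-`(v,t)`-walk of `G`. -/
def IsWalkFromToApp (G : TemporalGraph V) (s v : V) (t : ℕ) (L : List (TArc V)) : Prop :=
  G.IsTWalk L ∧ StartsAt s L ∧ EndsAtApp v t L

/-- The list of vertices visited by a walk (its starting point followed by the
endpoints of all its transitions). -/
def walkVerts (L : List (TArc V)) : List V :=
  (L.head?.map Prod.fst).toList ++ L.map fun e => e.2.1

/-- A temporal path is a temporal walk that visits each vertex at most once. -/
def IsTPath (G : TemporalGraph V) (L : List (TArc V)) : Prop :=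
  G.IsTWalk L ∧ (walkVerts L).Nodup

/-- The walk `L` goes through vertex `v`. -/
def VisitsVertex (v : V) (L : List (TArc V)) : Prop := v ∈ walkVerts L

/-- The walk `L` contains a transition into the vertex appearance `(v, t)`. -/
def ContainsApp (v : V) (t : ℕ) (L : List (TArc V)) : Prop :=
  ∃ e ∈ L, e.2.1 = v ∧ e.2.2 = t

/-- The walk `L`, regarded as a walk starting at source `s`, goes through the vertex
appearance `(v, t)`; by convention the source is visited at the appearance `(s, 0)` only. -/
def VisitsApp (s v : V) (t : ℕ) (L : List (TArc V)) : Prop :=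
  (v = s ∧ t = 0) ∨ (v ≠ s ∧ ContainsApp v t L)

/-- A cost function maps temporal walks (arc sequences) to `ℝ ∪ {∞}`. -/
abbrev CostFn (V : Type*) := List (TArc V) → WithTop ℝ

/-- `c*_s(v, t)`: the minimum value of `c` over all `s`-`(v,t)`-walks; it is `∞` if the
minimum is not defined (not attained) or if there is no such walk. -/
noncomputable def cStar (G : TemporalGraph V) (c : CostFn V) (s v : V) (t : ℕ) : WithTop ℝ :=
  if h : ∃ L, G.IsWalkFromToApp s v t L ∧ ∀ L', G.IsWalkFromToApp s v t L' → c L ≤ c L' then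
    c h.choose
  else ⊤

/-- `c*_s(v) = min_{t ∈ [T]} c*_s(v, t)`. -/
noncomputable def cStarV (G : TemporalGraph V) (c : CostFn V) (s v : V) : WithTop ℝ :=
  (Finset.Icc 1 G.lifetime).inf fun t => G.cStar c s v t

/-- `L` is a `c`-optimal `s`-`(v,t)`-walk: `c L = c*_s(v, t) < ∞`. -/
def IsOptWalkToApp (G : TemporalGraph V) (c : CostFn V) (s v : V) (t : ℕ)
    (L : List (TArc V)) : Prop :=
  G.IsWalkFromToApp s v t L ∧ c L = G.cStar c s v t ∧ c L ≠ ⊤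

/-- `L` is a `c`-optimal `s`-`v`-walk: `c L = c*_s(v) < ∞`. -/
def IsOptWalkTo (G : TemporalGraph V) (c : CostFn V) (s v : V) (L : List (TArc V)) : Prop :=
  G.IsWalkFromTo s v L ∧ c L = G.cStarV c s v ∧ c L ≠ ⊤

/-- The induced set `𝒲^(c)` of optimal temporal walks of `c`. -/
def OptWalks (G : TemporalGraph V) (c : CostFn V) : Set (List (TArc V)) :=
  {L | ∃ s z, G.IsOptWalkTo c s z L}

/-- `c` is prefix-optimal: every prefix of an optimal temporal walk from `s`, ending at a
vertex appearance `(v, t)` of the walk, has cost `c*_s(v, t)`. -/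
def PrefixOptimal (G : TemporalGraph V) (c : CostFn V) : Prop :=
  ∀ L ∈ G.OptWalks c, ∀ s, StartsAt s L →
    ∀ (i : ℕ) (e : TArc V), L[i]? = some e →
      c (L.take (i + 1)) = G.cStar c s e.2.1 e.2.2

/-- `c` is prefix-exchangeable: if an optimal temporal walk from `s` goes through a vertex
appearance `(v, t)`, then replacing its prefix up to `(v, t)` by any `s`-`(v,t)`-walk of
cost `c*_s(v, t)` again yields an optimal temporal walk. -/
def PrefixExchangeable (G : TemporalGraph V) (c : CostFn V) : Prop :=
  ∀ L ∈ G.OptWalks c, ∀ s, StartsAt s L →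
    ∀ (i : ℕ) (e : TArc V), L[i]? = some e →
      ∀ L', G.IsWalkFromToApp s e.2.1 e.2.2 L' → c L' = G.cStar c s e.2.1 e.2.2 →
        L' ++ L.drop (i + 1) ∈ G.OptWalks c

/-- `c` is prefix-compatible if it is both prefix-optimal and prefix-exchangeable. -/
def PrefixCompatible (G : TemporalGraph V) (c : CostFn V) : Prop :=
  G.PrefixOptimal c ∧ G.PrefixExchangeable c

/-- `c` is finite if `𝒲^(c)` has finite cardinality. -/
def FiniteCost (G : TemporalGraph V) (c : CostFn V) : Prop := (G.OptWalks c).Finite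

/-- The direct predecessor relation of source `s` with respect to the walk set `Wset`:
`IsDirPred Wset s p q` holds iff `p ∈ Pre_s(q)`, i.e. iff some walk in `Wset` starting
at `s` visits the vertex appearance `p` directly before the vertex appearance `q`, or
`p = (s, 0)` and some walk in `Wset` starting at `s` begins with a transition into `q`.
This relation is exactly the arc relation of the predecessor graph `G̃_s`. -/
def IsDirPred (Wset : Set (List (TArc V))) (s : V) (p q : V × ℕ) : Prop :=
  ∃ L ∈ Wset, StartsAt s L ∧
    ((∃ (i : ℕ) (e f : TArc V), L[i]? = some e ∧ L[i + 1]? = some f ∧ e.2 = p ∧ f.2 = q) ∨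
      (p = (s, 0) ∧ ∃ f ∈ L.head?, f.2 = q))

/-- A directed path from `p` to `q` in the static digraph given by the arc relation `R`. -/
def IsRelPath {α : Type*} (R : α → α → Prop) (p q : α) (P : List α) : Prop :=
  P.Chain' R ∧ P.head? = some p ∧ P.getLast? = some q ∧ P.Nodup

/-- `σ_{sz}`: the number of `s`-`z`-walks in `𝒲`. -/
noncomputable def sigma (G : TemporalGraph V) (𝒲 : Set (List (TArc V))) (s z : V) : ℕ :=
  {L ∈ 𝒲 | G.IsWalkFromTo s z L}.ncard

/-- `σ_{sz}(v)`: the number of `s`-`z`-walks in `𝒲` that go through the vertex `v`. -/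
noncomputable def sigmaV (G : TemporalGraph V) (𝒲 : Set (List (TArc V))) (s z v : V) : ℕ :=
  {L ∈ 𝒲 | G.IsWalkFromTo s z L ∧ VisitsVertex v L}.ncard

/-- `σ_{sz}(v, t)`: the number of `s`-`z`-walks in `𝒲` that go through the vertex
appearance `(v, t)`. -/
noncomputable def sigmaApp (G : TemporalGraph V) (𝒲 : Set (List (TArc V))) (s z v : V)
    (t : ℕ) : ℕ :=
  {L ∈ 𝒲 | G.IsWalkFromTo s z L ∧ VisitsApp s v t L}.ncard

/-- `σ_{s(v,t)}`: the number of `c`-optimal `s`-`(v,t)`-walks. -/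
noncomputable def sigmaOptApp (G : TemporalGraph V) (c : CostFn V) (s v : V) (t : ℕ) : ℕ :=
  {L | G.IsOptWalkToApp c s v t L}.ncard

/-- The pair dependency `δ_{𝒲,sz}(v)`. -/
noncomputable def pairDep (G : TemporalGraph V) (𝒲 : Set (List (TArc V))) (s z v : V) : ℝ :=
  if 0 < G.sigma 𝒲 s z then (G.sigmaV 𝒲 s z v : ℝ) / (G.sigma 𝒲 s z : ℝ) else 0

/-- The temporal pair dependency `δ_{𝒲,sz}(v, t)`. -/
noncomputable def pairDepApp (G : TemporalGraph V) (𝒲 : Set (List (TArc V))) (s z v : V)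
    (t : ℕ) : ℝ :=
  if 0 < G.sigma 𝒲 s z then (G.sigmaApp 𝒲 s z v t : ℝ) / (G.sigma 𝒲 s z : ℝ) else 0

/-- The cumulative dependency `δ_{𝒲,s}(v)`. -/
noncomputable def cumDep [Fintype V] (G : TemporalGraph V) (𝒲 : Set (List (TArc V)))
    (s v : V) : ℝ :=
  ∑ z : V, G.pairDep 𝒲 s z v

/-- The temporal cumulative dependency `δ_{𝒲,s}(v, t)`. -/
noncomputable def cumDepApp [Fintype V] (G : TemporalGraph V) (𝒲 : Set (List (TArc V)))
    (s v : V) (t : ℕ) : ℝ :=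
  ∑ z : V, G.pairDepApp 𝒲 s z v t

/-- The temporal betweenness centrality `B_𝒲(v) = Σ_{s ≠ v ≠ z} δ_{𝒲,sz}(v)`. -/
noncomputable def btw [Fintype V] (G : TemporalGraph V) (𝒲 : Set (List (TArc V)))
    (v : V) : ℝ :=
  ∑ s : V, ∑ z : V, if s ≠ v ∧ z ≠ v then G.pairDep 𝒲 s z v else 0

/-- The total temporal betweenness centrality `B*_𝒲(v) = Σ_{s, z ∈ V} δ_{𝒲,sz}(v)`. -/
noncomputable def totBtw [Fintype V] (G : TemporalGraph V) (𝒲 : Set (List (TArc V)))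
    (v : V) : ℝ :=
  ∑ s : V, ∑ z : V, G.pairDep 𝒲 s z v

/-- The edge dependency `δ_{𝒲,sz}(v, t, (v, w, t'))`: the fraction of `s`-`z`-walks in `𝒲`
that go through the vertex appearance `(v, t)` and use the time arc `(v, w, t')`. -/
noncomputable def edgeDep (G : TemporalGraph V) (𝒲 : Set (List (TArc V))) (s z v : V)
    (t : ℕ) (w : V) (t' : ℕ) : ℝ :=
  if 0 < G.sigma 𝒲 s z then
    ({L ∈ 𝒲 | G.IsWalkFromTo s z L ∧ VisitsApp s v t L ∧ (v, w, t') ∈ L}.ncard : ℝ) /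
      (G.sigma 𝒲 s z : ℝ)
  else 0

/-- The prefix of a temporal walk up to its `q`-th arc `f` is an `s`-`(f.2.1, f.2.2)`-walk. -/
lemma prefix_isWalkToApp {V : Type*} (G : TemporalGraph V) {K : List (TArc V)}
    (hW : G.IsTWalk K) {s : V} (hs : StartsAt s K) {q : ℕ} {f : TArc V}
    (hf : K[q]? = some f) : G.IsWalkFromToApp s f.2.1 f.2.2 (K.take (q + 1)) := by
  have hq : q < K.length := (List.getElem?_eq_some_iff.mp hf).1
  have hlen : (K.take (q + 1)).length = q + 1 := by
    simp only [List.length_take]; omega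
  refine ⟨⟨?_, fun e he => hW.2.1 e (List.mem_of_mem_take he), hW.2.2.take _⟩, ?_, ?_⟩
  · intro h; rw [h] at hlen; simp at hlen
  · obtain ⟨a, ha, has⟩ := hs
    refine ⟨a, ?_, has⟩
    have hh : (K.take (q + 1)).head? = K.head? := by cases K <;> simp
    rw [hh]; exact ha
  · refine ⟨f, ?_, rfl, rfl⟩
    rw [List.getLast?_eq_getElem?, hlen]
    simpa [List.getElem?_take] using hf

/-- Splicing a cost-optimal prefix of `L₂` ending at appearance `f.2` into `L₁` at an
arc `e` with `e.2 = f.2` yields an optimal walk from `s`. -/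
lemma splice {V : Type*} (G : TemporalGraph V) (c : CostFn V) (hpc : G.PrefixCompatible c)
    (s : V) {L₁ L₂ : List (TArc V)} (h₁ : L₁ ∈ G.OptWalks c) (h₂ : L₂ ∈ G.OptWalks c)
    (hs₁ : StartsAt s L₁) (hs₂ : StartsAt s L₂) {i j : ℕ} {e f : TArc V}
    (he : L₁[i]? = some e) (hf : L₂[j]? = some f) (hef : e.2 = f.2) :
    L₂.take (j + 1) ++ L₁.drop (i + 1) ∈ G.OptWalks c ∧
    StartsAt s (L₂.take (j + 1) ++ L₁.drop (i + 1)) ∧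
    (∀ k, k ≤ j → (L₂.take (j + 1) ++ L₁.drop (i + 1))[k]? = L₂[k]?) ∧
    (∀ k, (L₂.take (j + 1) ++ L₁.drop (i + 1))[(j + 1) + k]? = L₁[(i + 1) + k]?) ∧
    (L₂.take (j + 1) ++ L₁.drop (i + 1)).length = (j + 1) + (L₁.length - (i + 1)) := by
  have hj : j < L₂.length := (List.getElem?_eq_some_iff.mp hf).1
  have hW₂ : G.IsTWalk L₂ := by
    obtain ⟨s₂, z₂, hopt⟩ := h₂; exact hopt.1.1
  have hP := G.prefix_isWalkToApp hW₂ hs₂ hf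
  have hcost := hpc.1 L₂ h₂ s hs₂ j f hf
  have hmem := hpc.2 L₁ h₁ s hs₁ i e he (L₂.take (j + 1))
    (by rw [hef]; exact hP) (by rw [hef]; exact hcost)
  have hlenP : (L₂.take (j + 1)).length = j + 1 := by
    simp only [List.length_take]; omega
  refine ⟨hmem, ?_, ?_, ?_, ?_⟩
  · obtain ⟨a, ha, has⟩ := hs₂
    refine ⟨a, ?_, has⟩
    rw [List.head?_append]
    have hh : (L₂.take (j + 1)).head? = L₂.head? := by cases L₂ <;> simp
    rw [hh, ha]; rfl
  · intro k hk
    rw [List.getElem?_append, hlenP, if_pos (by omega), List.getElem?_take, if_pos (by omega)]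
  · intro k
    rw [List.getElem?_append_right (by rw [hlenP]; omega), hlenP,
      show (j + 1) + k - (j + 1) = k from by omega, List.getElem?_drop]
  · rw [List.length_append, hlenP, List.length_drop]

/-- Let `c` be a prefix-compatible cost function on a temporal graph
`𝒢`, fix a source `s`, and suppose that `𝒲^(c)` contains two walks starting at `s` such
that one visits the vertex appearance `(v, t)` before the vertex appearance `(w, t̂)` and
the other visits `(w, t̂)` before `(v, t)` (the predecessor relation of `s` is cyclic).
Then there exists a `c`-optimal walk starting at `s` that visits the same vertex
appearance twice; consequently, `c` is not finite. -/
theorem cyclic_predecessors_not_finite {V : Type*} [Fintype V] (G : TemporalGraph V)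
    (c : CostFn V) (hpc : G.PrefixCompatible c) (s v w : V) (t that : ℕ)
    (L₁ L₂ : List (TArc V)) (h₁ : L₁ ∈ G.OptWalks c) (h₂ : L₂ ∈ G.OptWalks c)
    (hs₁ : StartsAt s L₁) (hs₂ : StartsAt s L₂)
    (hbefore₁ : ∃ (i j : ℕ) (e f : TArc V), i < j ∧ L₁[i]? = some e ∧ L₁[j]? = some f ∧
      e.2 = (v, t) ∧ f.2 = (w, that))
    (hbefore₂ : ∃ (i j : ℕ) (e f : TArc V), i < j ∧ L₂[i]? = some e ∧ L₂[j]? = some f ∧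
      e.2 = (w, that) ∧ f.2 = (v, t)) :
    (∃ L ∈ G.OptWalks c, StartsAt s L ∧ ¬ (L.map Prod.snd).Nodup) ∧
      ¬ G.FiniteCost c := by
  classical
  obtain ⟨i₁, j₁, e₁, f₁, hij₁, he₁, hf₁, he₁v, hf₁w⟩ := hbefore₁
  obtain ⟨i₂, j₂, e₂, f₂, hij₂, he₂, hf₂, he₂w, hf₂v⟩ := hbefore₂
  have hef : e₁.2 = f₂.2 := by rw [he₁v, hf₂v]
  obtain ⟨hmem, hstart, hleft, hright, hlen⟩ :=
    splice G c hpc s h₁ h₂ hs₁ hs₂ he₁ hf₂ hef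
  set L' := L₂.take (j₂ + 1) ++ L₁.drop (i₁ + 1) with hL'
  set p := i₂ with hp
  set q := (j₂ + 1) + (j₁ - (i₁ + 1)) with hq
  have hp' : L'[p]? = some e₂ := by rw [hleft i₂ (le_of_lt hij₂)]; exact he₂
  have hq' : L'[q]? = some f₁ := by
    have h := hright (j₁ - (i₁ + 1))
    rw [show (i₁ + 1) + (j₁ - (i₁ + 1)) = j₁ from by omega] at h
    rw [hq, h]; exact hf₁
  have hpq : p < q := by omega
  have hef2 : e₂.2 = f₁.2 := by rw [he₂w, hf₁w]
  have key : ∀ K, K ∈ G.OptWalks c → StartsAt s K → K[p]? = some e₂ → K[q]? = some f₁ →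
      (K.take (q + 1) ++ K.drop (p + 1)) ∈ G.OptWalks c ∧
      StartsAt s (K.take (q + 1) ++ K.drop (p + 1)) ∧
      (K.take (q + 1) ++ K.drop (p + 1))[p]? = some e₂ ∧
      (K.take (q + 1) ++ K.drop (p + 1))[q]? = some f₁ ∧
      (K.take (q + 1) ++ K.drop (p + 1)).length = K.length + (q - p) := by
    intro K hK hsK hpK hqK
    obtain ⟨m, st, lft, rgt, len⟩ := splice G c hpc s hK hK hsK hsK hpK hqK hef2
    have hqlt : q < K.length := (List.getElem?_eq_some_iff.mp hqK).1
    refine ⟨m, st, ?_, ?_, ?_⟩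
    · rw [lft p (le_of_lt hpq)]; exact hpK
    · rw [lft q le_rfl]; exact hqK
    · rw [len]; omega
  constructor
  · refine ⟨L', hmem, hstart, ?_⟩
    intro hnd
    have h1 : (L'.map Prod.snd)[p]? = some e₂.2 := by rw [List.getElem?_map, hp']; rfl
    have h2 : (L'.map Prod.snd)[q]? = some f₁.2 := by rw [List.getElem?_map, hq']; rfl
    have hplt : p < (L'.map Prod.snd).length := by
      rw [List.length_map]; exact (List.getElem?_eq_some_iff.mp hp').1
    have := (List.getElem?_inj (l := L'.map Prod.snd) (i := p) (j := q) hplt hnd).mp (by rw [h1, h2, hef2])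
    omega
  · intro hfin
    set g : ℕ → List (TArc V) :=
      fun n => (fun K => K.take (q + 1) ++ K.drop (p + 1))^[n] L' with hg_def
    have hg : ∀ n, g n ∈ G.OptWalks c ∧ StartsAt s (g n) ∧ (g n)[p]? = some e₂ ∧
        (g n)[q]? = some f₁ ∧ (g n).length = L'.length + n * (q - p) := by
      intro n
      induction n with
      | zero => exact ⟨hmem, hstart, hp', hq', by simp [hg_def]⟩
      | succ n ih =>
        obtain ⟨ha, hb, hc, hd, he⟩ := ih
        have hstep : g (n + 1) = (g n).take (q + 1) ++ (g n).drop (p + 1) :=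
          Function.iterate_succ_apply' _ n L'
        obtain ⟨m1, m2, m3, m4, m5⟩ := key (g n) ha hb hc hd
        rw [hstep]
        refine ⟨m1, m2, m3, m4, ?_⟩
        rw [m5, he]; ring
    have hinj : Function.Injective g := by
      intro m n hmn
      have hm := (hg m).2.2.2.2
      have hn := (hg n).2.2.2.2
      rw [hmn, hn] at hm
      have hqp : 0 < q - p := by omega
      have : m * (q - p) = n * (q - p) := by omega
      exact Nat.eq_of_mul_eq_mul_right hqp this
    exact Set.infinite_of_injective_forall_mem hinj (fun n => (hg n).1) hfin


end TemporalGraph
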